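/- Let Δ ≥ 2 and let T be the 2H-tree T_{n₁,…,n_t} with t = Δ, n₁ = … = n_{t−2} = 0, n_{t−1} = Δ − 2, and n_t = Δ − 1 (so T has maximum degree Δ). Then χ'_s(T) = Δ. -/
import Mathlib


/-- A star edge coloring of `G` with `k` colors: a proper edge coloring such that
no path or cycle of length four (four edges) is bi-colored. The walk
`a-b-x-y-z` ranges over all paths of length four (`a,b,x,y,z` distinct) and all
cycles of length four (`z = a` and `a,b,x,y` distinct). -/
def IsStarEdgeColoring {V : Type*} (G : SimpleGraph V) {k : ℕ} (c : Sym2 V → Fin k) : Prop :=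
  (∀ ⦃u v w : V⦄, G.Adj u v → G.Adj u w → v ≠ w → c s(u, v) ≠ c s(u, w)) ∧
  (∀ a b x y z : V, G.Adj a b → G.Adj b x → G.Adj x y → G.Adj y z →
    a ≠ x → a ≠ y → b ≠ y → b ≠ z → x ≠ z →
    ¬(c s(a, b) = c s(x, y) ∧ c s(b, x) = c s(y, z)))

/-- The star chromatic index of `G`: the least `k` admitting a star edge coloring. -/
noncomputable def starChromaticIndex {V : Type*} (G : SimpleGraph V) : ℕ :=
  sInf {k : ℕ | ∃ c : Sym2 V → Fin k, IsStarEdgeColoring G c}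
/-- The 2H-tree `T_{n₁,…,n_t}`: a root (`none`), its `t` neighbours `uᵢ = some ⟨i, none⟩`,
and for each `i`, `n i` further leaves `some ⟨i, some j⟩` adjacent to `uᵢ`. -/
def twoHTree (t : ℕ) (n : Fin t → ℕ) :
    SimpleGraph (Option (Σ i : Fin t, Option (Fin (n i)))) :=
  SimpleGraph.fromRel (fun x y =>
    (x = none ∧ ∃ i : Fin t, y = some ⟨i, none⟩) ∨
    (∃ (i : Fin t) (j : Fin (n i)), x = some ⟨i, none⟩ ∧ y = some ⟨i, some j⟩))

/-- claim in the proof of Theorem 6.5. For `Δ ≥ 2`, the 2H-tree with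
`t = Δ`, `n₁ = ⋯ = n_{Δ-2} = 0`, `n_{Δ-1} = Δ - 2`, and `n_Δ = Δ - 1` (which has maximum
degree `Δ`) has star chromatic index exactly `Δ`. -/

lemma adj_root {t n} {q} (h : (twoHTree t n).Adj none q) : ∃ i, q = some ⟨i, none⟩ := by
  rw [twoHTree, SimpleGraph.fromRel_adj] at h
  obtain ⟨hne, h | h⟩ := h
  · rcases h with ⟨_, i, rfl⟩ | ⟨i, j, h, _⟩
    · exact ⟨i, rfl⟩
    · exact absurd h (by simp)
  · rcases h with ⟨rfl, _⟩ | ⟨i, j, _, h⟩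
    · exact absurd rfl hne
    · exact absurd h (by simp)

lemma adj_mid {t n} {i : Fin t} {q} (h : (twoHTree t n).Adj (some ⟨i, none⟩) q) :
    q = none ∨ ∃ j, q = some ⟨i, some j⟩ := by
  rw [twoHTree, SimpleGraph.fromRel_adj] at h
  obtain ⟨hne, h | h⟩ := h
  · rcases h with ⟨h, _⟩ | ⟨i', j, h, rfl⟩
    · exact absurd h (by simp)
    · obtain ⟨rfl, -⟩ := Sigma.mk.inj_iff.1 (Option.some.inj h)
      exact Or.inr ⟨j, rfl⟩
  · rcases h with ⟨rfl, _⟩ | ⟨i', j, rfl, h⟩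
    · exact Or.inl rfl
    · obtain ⟨rfl, h2⟩ := Sigma.mk.inj_iff.1 (Option.some.inj h)
      simp at h2

lemma adj_leaf {t n} {i : Fin t} {j} {q} (h : (twoHTree t n).Adj (some ⟨i, some j⟩) q) :
    q = some ⟨i, none⟩ := by
  rw [twoHTree, SimpleGraph.fromRel_adj] at h
  obtain ⟨hne, h | h⟩ := h
  · rcases h with ⟨h, _⟩ | ⟨i', j', h, rfl⟩
    · exact absurd h (by simp)
    · obtain ⟨rfl, h2⟩ := Sigma.mk.inj_iff.1 (Option.some.inj h)
      simp at h2
  · rcases h with ⟨rfl, _, h⟩ | ⟨i', j', rfl, h⟩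
    · obtain ⟨rfl, h2⟩ := Sigma.mk.inj_iff.1 (Option.some.inj h)
      simp at h2
    · obtain ⟨rfl, -⟩ := Sigma.mk.inj_iff.1 (Option.some.inj h)
      rfl

lemma adj_root_mid {t n} (i : Fin t) : (twoHTree t n).Adj none (some ⟨i, none⟩) := by
  rw [twoHTree, SimpleGraph.fromRel_adj]
  exact ⟨by simp, Or.inl (Or.inl ⟨rfl, i, rfl⟩)⟩


def colFun (t : ℕ) (n : Fin t → ℕ) (h : 0 < t) :
    Option (Σ i : Fin t, Option (Fin (n i))) → Option (Σ i : Fin t, Option (Fin (n i))) → Fin t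
  | none, some ⟨i, none⟩ => i
  | some ⟨i, none⟩, none => i
  | some ⟨_, none⟩, some ⟨_, some j⟩ => ⟨(j : ℕ) % t, Nat.mod_lt _ h⟩
  | some ⟨_, some j⟩, some ⟨_, none⟩ => ⟨(j : ℕ) % t, Nat.mod_lt _ h⟩
  | _, _ => ⟨0, h⟩

lemma colFun_symm (t : ℕ) (n : Fin t → ℕ) (h : 0 < t) (x y) :
    colFun t n h x y = colFun t n h y x := by
  rcases x with _ | ⟨i, _ | j⟩ <;> rcases y with _ | ⟨i', _ | j'⟩ <;> rfl

noncomputable def treeCol (t : ℕ) (n : Fin t → ℕ) (h : 0 < t) :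
    Sym2 (Option (Σ i : Fin t, Option (Fin (n i)))) → Fin t :=
  Sym2.lift ⟨colFun t n h, colFun_symm t n h⟩

lemma treeCol_mk (t : ℕ) (n : Fin t → ℕ) (h : 0 < t) (x y) :
    treeCol t n h s(x, y) = colFun t n h x y := by
  simp [treeCol]

lemma star_coloring (t : ℕ) (n : Fin t → ℕ) (h : 0 < t) (hn : ∀ i : Fin t, n i ≤ (i : ℕ)) :
    IsStarEdgeColoring (twoHTree t n) (treeCol t n h) := by
  constructor
  · intro u v w huv huw hvw
    rcases u with _ | ⟨i, _ | j⟩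
    · obtain ⟨iv, rfl⟩ := adj_root huv
      obtain ⟨iw, rfl⟩ := adj_root huw
      rw [treeCol_mk, treeCol_mk]
      simp only [colFun]
      intro hc
      exact hvw (by rw [hc])
    · rcases adj_mid huv with rfl | ⟨jv, rfl⟩ <;> rcases adj_mid huw with rfl | ⟨jw, rfl⟩
      · exact absurd rfl hvw
      · rw [treeCol_mk, treeCol_mk]
        simp only [colFun]
        have h1 : (jw : ℕ) < n i := jw.isLt
        have h2 : n i ≤ (i : ℕ) := hn i
        have h3 : (i : ℕ) < t := i.isLt
        have h4 : (jw : ℕ) % t = jw := Nat.mod_eq_of_lt (by omega)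
        intro hc
        rw [Fin.ext_iff] at hc
        simp only at hc
        omega
      · rw [treeCol_mk, treeCol_mk]
        simp only [colFun]
        have h1 : (jv : ℕ) < n i := jv.isLt
        have h2 : n i ≤ (i : ℕ) := hn i
        have h3 : (i : ℕ) < t := i.isLt
        have h4 : (jv : ℕ) % t = jv := Nat.mod_eq_of_lt (by omega)
        intro hc
        rw [Fin.ext_iff] at hc
        simp only at hc
        omega
      · rw [treeCol_mk, treeCol_mk]
        simp only [colFun]
        have h1 : (jv : ℕ) < n i := jv.isLt
        have h1' : (jw : ℕ) < n i := jw.isLt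
        have h2 : n i ≤ (i : ℕ) := hn i
        have h3 : (i : ℕ) < t := i.isLt
        have h4 : (jv : ℕ) % t = jv := Nat.mod_eq_of_lt (by omega)
        have h5 : (jw : ℕ) % t = jw := Nat.mod_eq_of_lt (by omega)
        intro hc
        rw [Fin.ext_iff] at hc
        simp only at hc
        have : (jv : ℕ) = (jw : ℕ) := by omega
        exact hvw (by simp [Fin.ext_iff, this])
    · have hv := adj_leaf huv
      have hw := adj_leaf huw
      rw [hv, hw] at hvw
      exact absurd rfl hvw
  · intro a b x y z hab hbx hxy hyz hax hay hby hbz hxz ⟨h1, h2⟩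
    rcases x with _ | ⟨i, _ | j⟩
    · -- x = root
      obtain ⟨ib, rfl⟩ := adj_root hbx.symm
      obtain ⟨iy, rfl⟩ := adj_root hxy
      -- a is a neighbor of b=u_ib distinct from root
      rcases adj_mid hab.symm with rfl | ⟨ja, rfl⟩
      · exact hax rfl
      rcases adj_mid hyz with rfl | ⟨jz, rfl⟩
      · exact hxz rfl
      rw [treeCol_mk, treeCol_mk] at h1 h2
      simp only [colFun] at h1 h2
      rw [Fin.ext_iff] at h1 h2
      simp only at h1 h2
      have k1 : (ja : ℕ) < n ib := ja.isLt
      have k2 : (jz : ℕ) < n iy := jz.isLt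
      have k3 := hn ib
      have k4 := hn iy
      have k5 : (ib : ℕ) < t := ib.isLt
      have k6 : (iy : ℕ) < t := iy.isLt
      have k7 : (ja : ℕ) % t = ja := Nat.mod_eq_of_lt (by omega)
      have k8 : (jz : ℕ) % t = jz := Nat.mod_eq_of_lt (by omega)
      omega
    · -- x = some ⟨i, none⟩
      rcases adj_mid hbx.symm with rfl | ⟨jb, rfl⟩
      · rcases adj_mid hxy with rfl | ⟨jy, rfl⟩
        · exact hby rfl
        · exact hxz (adj_leaf hyz).symm
      · exact hax (adj_leaf hab.symm)
    · -- x = leaf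
      have hb := adj_leaf hbx.symm
      have hy := adj_leaf hxy
      rw [hb, hy] at hby
      exact hby rfl

theorem twoHTree_special_star_eq_maxDegree (Δ : ℕ) (hΔ : 2 ≤ Δ) :
    starChromaticIndex (twoHTree Δ (fun i : Fin Δ =>
      if (i : ℕ) = Δ - 1 then Δ - 1 else if (i : ℕ) = Δ - 2 then Δ - 2 else 0)) = Δ := by
  set n : Fin Δ → ℕ := fun i : Fin Δ =>
      if (i : ℕ) = Δ - 1 then Δ - 1 else if (i : ℕ) = Δ - 2 then Δ - 2 else 0 with hn_def
  have h0 : 0 < Δ := by omega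
  have hn : ∀ i : Fin Δ, n i ≤ (i : ℕ) := by
    intro i
    have := i.isLt
    simp only [hn_def]
    split_ifs <;> omega
  have hmem : Δ ∈ {k : ℕ | ∃ c : Sym2 _ → Fin k, IsStarEdgeColoring (twoHTree Δ n) c} :=
    ⟨treeCol Δ n h0, star_coloring Δ n h0 hn⟩
  refine le_antisymm (Nat.sInf_le hmem) (le_csInf ⟨Δ, hmem⟩ ?_)
  rintro k ⟨c, hp, -⟩
  have hinj : Function.Injective (fun i : Fin Δ => c s(none, some ⟨i, none⟩)) := by
    intro i i' he
    by_contra hne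
    exact hp (adj_root_mid i) (adj_root_mid i')
      (by simp only [ne_eq, Option.some.injEq, Sigma.mk.inj_iff]; exact fun h => hne h.1) he
  simpa using Fintype.card_le_of_injective _ hinj
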